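/- For a finite simple graph G, the set of H-eigenvalues of the Laplacian tensor L(G^{k,k/2}) equals the union, over all nonempty subsets U ⊆ V with the induced subgraph G[U] connected, of the sets of eigenvalues of the real symmetric matrices D_U − A_U. -/

import Mathlib

open scoped BigOperators
open Matrix

/-- `lam` is an eigenvalue of the Laplacian tensor `L(G^{k,k/2})` of the generalized power
hypergraph `G^{k,k/2}` with eigenvector `x`. -/
def IsLapEigenpair {V : Type*} [Fintype V] [DecidableEq V] (k s : ℕ)
    (G : SimpleGraph V) [DecidableRel G.Adj]
    (lam : ℂ) (x : V × Fin s → ℂ) : Prop :=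
  x ≠ 0 ∧ ∀ (u : V) (v : Fin s),
    ((G.degree u : ℂ) - lam) * x (u, v) ^ (k - 1) =
      ∑ w ∈ G.neighborFinset u,
        (∏ p ∈ Finset.univ.erase v, x (u, p)) * ∏ q : Fin s, x (w, q)

/-- The induced graph on the support of a connected component of a subgraph is connected. -/
lemma aux_conn {V : Type*} {G' G : SimpleGraph V} (hle : G' ≤ G) (c : G'.ConnectedComponent) :
    (G.induce c.supp).Connected := by
  obtain ⟨u0, hu0⟩ := c.exists_rep
  have hu0' : u0 ∈ c.supp := hu0
  have key : ∀ {a b : V} (_ : G'.Walk a b) (ha : a ∈ c.supp) (hb : b ∈ c.supp),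
      (G.induce c.supp).Reachable ⟨a, ha⟩ ⟨b, hb⟩ := by
    intro a b p
    induction p with
    | nil => intro ha hb; exact SimpleGraph.Reachable.refl _
    | @cons a x b h p ih =>
      intro ha hb
      have hx : x ∈ c.supp := by
        rw [SimpleGraph.ConnectedComponent.mem_supp_iff] at ha ⊢
        rw [← ha]
        exact SimpleGraph.ConnectedComponent.sound (SimpleGraph.Adj.reachable h.symm)
      exact (SimpleGraph.Adj.reachable
        (by exact hle h : (G.induce c.supp).Adj ⟨a, ha⟩ ⟨x, hx⟩)).trans (ih hx hb)
  haveI : Nonempty c.supp := ⟨⟨u0, hu0'⟩⟩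
  refine ⟨?_⟩
  rintro ⟨a, ha⟩ ⟨b, hb⟩
  have hra : G'.Reachable a u0 := by
    rw [SimpleGraph.ConnectedComponent.mem_supp_iff] at ha
    exact SimpleGraph.ConnectedComponent.exact (ha.trans hu0.symm)
  have hrb : G'.Reachable b u0 := by
    rw [SimpleGraph.ConnectedComponent.mem_supp_iff] at hb
    exact SimpleGraph.ConnectedComponent.exact (hb.trans hu0.symm)
  obtain ⟨pa⟩ := hra
  obtain ⟨pb⟩ := hrb
  exact (key pa ha hu0').trans (key pb hb hu0').symm

/-- The set of `H`-eigenvalues of `L(G^{k,k/2})` (real eigenvalues admitting a real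
eigenvector) equals the union, over all nonempty `U ⊆ V` with `G[U]` connected, of the sets of
eigenvalues of the real symmetric matrices `D_U − A_U`. -/
theorem stmt8 {V : Type*} [Fintype V] [DecidableEq V] (k s : ℕ)
    (hk : 4 ≤ k) (hks : k = 2 * s) (G : SimpleGraph V) [DecidableRel G.Adj] :
    {lam : ℝ | ∃ x : V × Fin s → ℝ,
        IsLapEigenpair k s G (lam : ℂ) (fun v => (x v : ℂ))} =
      {lam : ℝ | ∃ U : Finset V, U.Nonempty ∧ (G.induce (↑U : Set V)).Connected ∧
        ∃ y : {u // u ∈ U} → ℝ, y ≠ 0 ∧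
          (Matrix.diagonal (fun u : {u // u ∈ U} => (G.degree u.1 : ℝ)) -
              (G.adjMatrix ℝ).submatrix Subtype.val Subtype.val) *ᵥ y = lam • y} := by
  classical
  have hs2 : 2 ≤ s := by omega
  have hs0 : s ≠ 0 := by omega
  ext lam
  simp only [Set.mem_setOf_eq]
  constructor
  · rintro ⟨x, hx0, heq⟩
    have hxr : x ≠ 0 := by
      intro h
      apply hx0
      funext p
      simp [h]
    have hr : ∀ (u : V) (v : Fin s),
        ((G.degree u : ℝ) - lam) * x (u, v) ^ (k - 1) =
          ∑ w ∈ G.neighborFinset u,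
            (∏ p ∈ Finset.univ.erase v, x (u, p)) * ∏ q : Fin s, x (w, q) := by
      intro u v
      have h := heq u v
      beta_reduce at h
      exact_mod_cast h
    by_cases hdeg : ∃ u : V, (G.degree u : ℝ) = lam
    · obtain ⟨u, hu⟩ := hdeg
      have humem : u ∈ ({u} : Finset V) := Finset.mem_singleton_self u
      refine ⟨{u}, ⟨u, humem⟩, ?_, (fun _ => 1), ?_, ?_⟩
      · haveI : Nonempty (↑(↑({u} : Finset V) : Set V)) := ⟨⟨u, by simp⟩⟩
        refine ⟨?_⟩
        rintro ⟨a, ha⟩ ⟨b, hb⟩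
        simp only [Finset.coe_singleton, Set.mem_singleton_iff] at ha hb
        subst ha; subst hb
        exact SimpleGraph.Reachable.refl _
      · intro h
        simpa using congrFun h ⟨u, humem⟩
      · funext w
        obtain ⟨w, hw⟩ := w
        have hwu : w = u := Finset.mem_singleton.mp hw
        subst hwu
        rw [Matrix.sub_mulVec]
        have hD : (Matrix.diagonal (fun u : {a // a ∈ ({w} : Finset V)} => (G.degree u.1 : ℝ))
            *ᵥ fun _ : {a // a ∈ ({w} : Finset V)} => (1 : ℝ)) ⟨w, hw⟩ = (G.degree w : ℝ) * 1 := Matrix.mulVec_diagonal _ _ _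
        have hzs : ∀ b : {a // a ∈ ({w} : Finset V)},
            G.adjMatrix ℝ w (b : V) * (1 : ℝ) = 0 := by
          intro b
          have hb : (b : V) = w := Finset.mem_singleton.mp b.2
          simp [hb]
        have hA : (((G.adjMatrix ℝ).submatrix
              (Subtype.val : {a // a ∈ ({w} : Finset V)} → V) Subtype.val)
            *ᵥ fun _ : {a // a ∈ ({w} : Finset V)} => (1 : ℝ)) ⟨w, hw⟩ = 0 := by
          show ∑ b : {a // a ∈ ({w} : Finset V)}, G.adjMatrix ℝ w (b : V) * (1 : ℝ) = 0
          exact Finset.sum_eq_zero (fun b _ => hzs b)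
        rw [Pi.sub_apply, hD, hA, Pi.smul_apply, smul_eq_mul]
        rw [hu]
        ring
    · push_neg at hdeg
      have hdne : ∀ u : V, (G.degree u : ℝ) - lam ≠ 0 := fun u => sub_ne_zero.2 (hdeg u)
      set a : V → ℝ := fun u => ∏ v : Fin s, x (u, v) with ha_def
      have key1 : ∀ (u : V) (v : Fin s),
          ((G.degree u : ℝ) - lam) * x (u, v) ^ k = a u * ∑ w ∈ G.neighborFinset u, a w := by
        intro u v
        calc ((G.degree u : ℝ) - lam) * x (u, v) ^ k
            = (((G.degree u : ℝ) - lam) * x (u, v) ^ (k - 1)) * x (u, v) := by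
              rw [mul_assoc, ← pow_succ]
              congr 2
              omega
          _ = (∑ w ∈ G.neighborFinset u,
                (∏ p ∈ Finset.univ.erase v, x (u, p)) * ∏ q : Fin s, x (w, q)) * x (u, v) := by
              rw [hr u v]
          _ = a u * ∑ w ∈ G.neighborFinset u, a w := by
              rw [Finset.sum_mul, Finset.mul_sum]
              refine Finset.sum_congr rfl fun w _ => ?_
              rw [mul_right_comm, Finset.prod_erase_mul _ _ (Finset.mem_univ v)]
      have key2 : ∀ (u : V) (v v' : Fin s), x (u, v) ^ k = x (u, v') ^ k := fun u v v' =>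
        mul_left_cancel₀ (hdne u) ((key1 u v).trans (key1 u v').symm)
      have key2' : ∀ (u : V) (v v' : Fin s), x (u, v) ^ 2 = x (u, v') ^ 2 := by
        intro u v v'
        have h2 : (x (u, v) ^ 2) ^ s = (x (u, v') ^ 2) ^ s := by
          rw [← pow_mul, ← pow_mul, ← hks]
          exact key2 u v v'
        exact (pow_left_inj₀ (sq_nonneg _) (sq_nonneg _) hs0).mp h2
      have key3 : ∀ (u : V) (v : Fin s), a u ^ 2 = x (u, v) ^ k := by
        intro u v
        calc a u ^ 2 = ∏ p : Fin s, x (u, p) ^ 2 := (Finset.prod_pow _ _ _).symm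
          _ = ∏ _p : Fin s, x (u, v) ^ 2 := Finset.prod_congr rfl fun p _ => key2' u p v
          _ = (x (u, v) ^ 2) ^ s := by rw [Finset.prod_const, Finset.card_univ, Fintype.card_fin]
          _ = x (u, v) ^ k := by rw [← pow_mul, ← hks]
      have key5 : ∀ u : V, a u = 0 → ∀ v : Fin s, x (u, v) = 0 := by
        intro u hau v
        obtain ⟨p, -, hp⟩ := Finset.prod_eq_zero_iff.mp hau
        have hxk : x (u, v) ^ k = 0 := by rw [key2 u v p, hp, zero_pow (by omega)]
        exact pow_eq_zero_iff (by omega) |>.mp hxk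
      have key4 : ∀ u : V, a u ≠ 0 →
          ((G.degree u : ℝ) - lam) * a u = ∑ w ∈ G.neighborFinset u, a w := by
        intro u hau
        have h1 := key1 u ⟨0, by omega⟩
        rw [← key3 u ⟨0, by omega⟩] at h1
        have h2 : (((G.degree u : ℝ) - lam) * a u) * a u
            = (∑ w ∈ G.neighborFinset u, a w) * a u := by
          calc (((G.degree u : ℝ) - lam) * a u) * a u
              = ((G.degree u : ℝ) - lam) * a u ^ 2 := by ring
            _ = a u * ∑ w ∈ G.neighborFinset u, a w := h1
            _ = (∑ w ∈ G.neighborFinset u, a w) * a u := mul_comm _ _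
        exact mul_right_cancel₀ hau h2
      obtain ⟨u0, hu0a⟩ : ∃ u : V, a u ≠ 0 := by
        by_contra h
        push_neg at h
        apply hxr
        funext p
        exact key5 p.1 (h p.1) p.2
      let G' : SimpleGraph V :=
        { Adj := fun p q => G.Adj p q ∧ a p ≠ 0 ∧ a q ≠ 0,
          symm := ⟨fun p q h => ⟨h.1.symm, h.2.2, h.2.1⟩⟩,
          loopless := ⟨fun p h => G.loopless.irrefl p h.1⟩ }
      have hle : G' ≤ G := by intro p q h; exact h.1
      set c := G'.connectedComponentMk u0 with hc
      let U : Finset V := Finset.univ.filter (fun w => G'.connectedComponentMk w = c)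
      have hmemU : ∀ w : V, w ∈ U ↔ G'.connectedComponentMk w = c := by
        intro w; simp [U]
      have hUc : (↑U : Set V) = c.supp := by
        ext w
        simp [U, SimpleGraph.ConnectedComponent.mem_supp_iff]
      have hUa : ∀ w ∈ U, a w ≠ 0 := by
        intro w hw
        rw [hmemU] at hw
        have hreach : G'.Reachable w u0 := SimpleGraph.ConnectedComponent.exact hw
        obtain ⟨p⟩ := hreach
        cases p with
        | nil => exact hu0a
        | cons h _ => exact h.2.1
      have hu0U : u0 ∈ U := (hmemU u0).mpr rfl
      refine ⟨U, ⟨u0, hu0U⟩, ?_, fun w => a w.1, ?_, ?_⟩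
      · rw [hUc]
        exact aux_conn hle c
      · intro h
        exact hu0a (congrFun h ⟨u0, hu0U⟩)
      · funext w
        obtain ⟨u, hu⟩ := w
        have hau : a u ≠ 0 := hUa u hu
        have hsum : ∑ w ∈ G.neighborFinset u, a w
            = ∑ w : {w // w ∈ U}, (if G.Adj u w.1 then a w.1 else 0) := by
          rw [Finset.sum_coe_sort U (fun w => if G.Adj u w then a w else 0),
            ← Finset.sum_filter]
          symm
          apply Finset.sum_subset
          · intro w hw
            rw [Finset.mem_filter] at hw
            rw [SimpleGraph.mem_neighborFinset]
            exact hw.2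
          · intro w hwnbr hwnot
            by_contra haw
            apply hwnot
            rw [Finset.mem_filter]
            have hadj : G.Adj u w := (SimpleGraph.mem_neighborFinset _ _ _).mp hwnbr
            have hG' : G'.Adj u w := ⟨hadj, hau, haw⟩
            have : G'.connectedComponentMk w = c := by
              rw [← (hmemU u).mp hu]
              exact SimpleGraph.ConnectedComponent.sound (SimpleGraph.Adj.reachable hG'.symm)
            exact ⟨(hmemU w).mpr this, hadj⟩
        have hD : (Matrix.diagonal (fun u : {u // u ∈ U} => (G.degree u.1 : ℝ))
            *ᵥ fun w : {u // u ∈ U} => a w.1) ⟨u, hu⟩ = (G.degree u : ℝ) * a u := Matrix.mulVec_diagonal _ _ _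
        have hA : (((G.adjMatrix ℝ).submatrix
              (Subtype.val : {u // u ∈ U} → V) Subtype.val)
            *ᵥ fun w : {u // u ∈ U} => a w.1) ⟨u, hu⟩
            = ∑ w : {w // w ∈ U}, (if G.Adj u w.1 then a w.1 else 0) := by
          show ∑ w : {w // w ∈ U}, G.adjMatrix ℝ u (w : V) * a w.1 = _
          refine Finset.sum_congr rfl fun w _ => ?_
          simp [SimpleGraph.adjMatrix_apply, ite_mul]
        rw [Matrix.sub_mulVec, Pi.sub_apply, hD, hA, ← hsum, Pi.smul_apply, smul_eq_mul]
        have h4 := key4 u hau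
        linarith [h4]
  · rintro ⟨U, hUne, -, y, hy0, hyeq⟩
    obtain ⟨u1, hu1⟩ : ∃ u : {u // u ∈ U}, y u ≠ 0 := by
      by_contra h
      push_neg at h
      exact hy0 (funext h)
    let Y : V → ℝ := fun u => if h : u ∈ U then y ⟨u, h⟩ else 0
    have hYdef : ∀ (u : V) (h : u ∈ U), Y u = y ⟨u, h⟩ := fun u h => dif_pos h
    have hYnot : ∀ u : V, u ∉ U → Y u = 0 := fun u h => dif_neg h
    let z : Fin s := ⟨0, by omega⟩
    let r : V → ℝ := fun u => |Y u| ^ ((s : ℝ)⁻¹)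
    let x : V × Fin s → ℝ := fun p => if p.2 = z ∧ Y p.1 < 0 then -(r p.1) else r p.1
    have hxdef : ∀ (u : V) (v : Fin s),
        x (u, v) = if v = z ∧ Y u < 0 then -(r u) else r u := fun u v => rfl
    have hrnn : ∀ u : V, 0 ≤ r u := fun u => Real.rpow_nonneg (abs_nonneg _) _
    have hrpow : ∀ u : V, r u ^ s = |Y u| := by
      intro u
      show (|Y u| ^ ((s : ℝ)⁻¹)) ^ s = |Y u|
      rw [← Real.rpow_natCast (|Y u| ^ ((s : ℝ)⁻¹)) s, ← Real.rpow_mul (abs_nonneg _),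
        inv_mul_cancel₀ (by exact_mod_cast hs0), Real.rpow_one]
    have hx2 : ∀ (u : V) (v : Fin s), x (u, v) ^ 2 = r u ^ 2 := by
      intro u v
      rw [hxdef]
      split
      · rw [neg_sq]
      · rfl
    have hprod : ∀ u : V, (∏ q : Fin s, x (u, q)) = Y u := by
      intro u
      rw [← Finset.mul_prod_erase Finset.univ _ (Finset.mem_univ z)]
      have h2 : ∀ p ∈ Finset.univ.erase z, x (u, p) = r u := by
        intro p hp
        rw [hxdef]
        rw [if_neg]
        intro hcon
        exact (Finset.mem_erase.mp hp).1 hcon.1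
      rw [Finset.prod_congr rfl h2, Finset.prod_const,
        Finset.card_erase_of_mem (Finset.mem_univ z), Finset.card_univ, Fintype.card_fin]
      have hrs : r u * r u ^ (s - 1) = r u ^ s := by
        rw [← pow_succ']
        congr 1
        omega
      by_cases hneg : Y u < 0
      · rw [hxdef, if_pos ⟨rfl, hneg⟩, neg_mul, hrs, hrpow, abs_of_neg hneg, neg_neg]
      · rw [hxdef, if_neg (fun hcon => hneg hcon.2), hrs, hrpow,
          abs_of_nonneg (not_lt.mp hneg)]
    have hzero : ∀ u : V, Y u = 0 → ∀ v : Fin s, x (u, v) = 0 := by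
      intro u hYu v
      have hru : r u = 0 := by
        show |Y u| ^ ((s : ℝ)⁻¹) = 0
        rw [hYu, abs_zero, Real.zero_rpow (inv_ne_zero (by exact_mod_cast hs0))]
      rw [hxdef, hru]
      split <;> simp
    have herase : (Finset.univ.erase z : Finset (Fin s)).Nonempty := by
      rw [← Finset.card_pos, Finset.card_erase_of_mem (Finset.mem_univ z),
        Finset.card_univ, Fintype.card_fin]
      omega
    have hsum2 : ∀ (u : V) (hu : u ∈ U),
        ∑ w ∈ G.neighborFinset u, Y w = ((G.degree u : ℝ) - lam) * Y u := by
      intro u hu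
      have h1 := congrFun hyeq ⟨u, hu⟩
      have hD : (Matrix.diagonal (fun u : {u // u ∈ U} => (G.degree u.1 : ℝ))
          *ᵥ y) ⟨u, hu⟩ = (G.degree u : ℝ) * y ⟨u, hu⟩ := Matrix.mulVec_diagonal _ _ _
      have hA : (((G.adjMatrix ℝ).submatrix
            (Subtype.val : {u // u ∈ U} → V) Subtype.val) *ᵥ y) ⟨u, hu⟩
          = ∑ w : {w // w ∈ U}, (if G.Adj u w.1 then y w else 0) := by
        show ∑ w : {w // w ∈ U}, G.adjMatrix ℝ u (w : V) * y w = _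
        refine Finset.sum_congr rfl fun w _ => ?_
        simp [SimpleGraph.adjMatrix_apply, ite_mul]
      rw [Matrix.sub_mulVec, Pi.sub_apply, hD, hA, Pi.smul_apply, smul_eq_mul] at h1
      have hsum : ∑ w ∈ G.neighborFinset u, Y w
          = ∑ w : {w // w ∈ U}, (if G.Adj u w.1 then y w else 0) := by
        have hcongr : ∀ w : {w // w ∈ U},
            (if G.Adj u w.1 then y w else 0) = (if G.Adj u w.1 then Y w.1 else 0) := by
          intro w
          rw [hYdef w.1 w.2]
        rw [Finset.sum_congr rfl (fun w _ => hcongr w),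
          Finset.sum_coe_sort U (fun w => if G.Adj u w then Y w else 0),
          ← Finset.sum_filter]
        symm
        apply Finset.sum_subset
        · intro w hw
          rw [Finset.mem_filter] at hw
          rw [SimpleGraph.mem_neighborFinset]
          exact hw.2
        · intro w hwnbr hwnot
          apply hYnot
          intro hwU
          exact hwnot (Finset.mem_filter.mpr
            ⟨hwU, (SimpleGraph.mem_neighborFinset _ _ _).mp hwnbr⟩)
      rw [hsum, hYdef u hu]
      linarith [h1]
    have hmain : ∀ (u : V) (v : Fin s),
        ((G.degree u : ℝ) - lam) * x (u, v) ^ (k - 1) =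
          ∑ w ∈ G.neighborFinset u,
            (∏ p ∈ Finset.univ.erase v, x (u, p)) * ∏ q : Fin s, x (w, q) := by
      intro u v
      by_cases hYu : Y u = 0
      · have hP : (∏ p ∈ Finset.univ.erase v, x (u, p)) = 0 := by
          obtain ⟨p, hp⟩ := by
            have : (Finset.univ.erase v : Finset (Fin s)).Nonempty := by
              rw [← Finset.card_pos, Finset.card_erase_of_mem (Finset.mem_univ v),
                Finset.card_univ, Fintype.card_fin]
              omega
            exact this
          exact Finset.prod_eq_zero hp (hzero u hYu p)
        rw [hzero u hYu v, zero_pow (by omega : k - 1 ≠ 0), mul_zero]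
        symm
        apply Finset.sum_eq_zero
        intro w _
        rw [hP, zero_mul]
      · have huU : u ∈ U := by
          by_contra h
          exact hYu (hYnot u h)
        have hrne : r u ≠ 0 := by
          intro h
          apply hYu
          have := hrpow u
          rw [h, zero_pow hs0] at this
          exact abs_eq_zero.mp this.symm
        have hxne : x (u, v) ≠ 0 := by
          rw [hxdef]
          split
          · simpa using hrne
          · exact hrne
        have hRHS : ∑ w ∈ G.neighborFinset u,
              (∏ p ∈ Finset.univ.erase v, x (u, p)) * ∏ q : Fin s, x (w, q)
            = (∏ p ∈ Finset.univ.erase v, x (u, p)) * (((G.degree u : ℝ) - lam) * Y u) := by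
          rw [← hsum2 u huU, Finset.mul_sum]
          refine Finset.sum_congr rfl fun w _ => ?_
          rw [hprod w]
        rw [hRHS]
        have hkey : x (u, v) ^ (k - 1) = (∏ p ∈ Finset.univ.erase v, x (u, p)) * Y u := by
          apply mul_right_cancel₀ hxne
          have h1 : x (u, v) ^ (k - 1) * x (u, v) = x (u, v) ^ k := by
            rw [← pow_succ]
            congr 1
            omega
          have h2 : x (u, v) ^ k = Y u ^ 2 := by
            rw [hks, pow_mul, hx2 u v, ← pow_mul, mul_comm 2 s, pow_mul, hrpow, sq_abs]
          have h3 : ((∏ p ∈ Finset.univ.erase v, x (u, p)) * Y u) * x (u, v) = Y u ^ 2 := by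
            rw [mul_right_comm, Finset.prod_erase_mul _ _ (Finset.mem_univ v), hprod, sq]
          rw [h1, h2, h3]
        rw [hkey]
        ring
    refine ⟨x, ?_, ?_⟩
    · intro h
      have hYu1 : Y u1.1 ≠ 0 := by
        rw [hYdef u1.1 u1.2]
        simpa using hu1
      have hrne : r u1.1 ≠ 0 := by
        intro hru
        apply hYu1
        have := hrpow u1.1
        rw [hru, zero_pow hs0] at this
        exact abs_eq_zero.mp this.symm
      have hv1 : (⟨1, by omega⟩ : Fin s) ≠ z := by
        intro hcon
        have : (1 : ℕ) = 0 := congrArg Fin.val hcon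
        omega
      have hx1 : x (u1.1, ⟨1, by omega⟩) = r u1.1 := by
        rw [hxdef, if_neg (fun hcon => hv1 hcon.1)]
      have := congrFun h (u1.1, ⟨1, by omega⟩)
      simp only [Pi.zero_apply, Complex.ofReal_eq_zero] at this
      rw [hx1] at this
      exact hrne this
    · intro u v
      beta_reduce
      exact_mod_cast hmain u v
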